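/- Let Q₁, …, Q_N ∈ ℂ be nonzero and let s₁, …, s_N ∈ ℂ be nonzero. Define F(s) := Σ_{k=1}^N s_k · [∏_{i=1}^N (1 − Q_i s_i/s_k)(1 − Q_i^{−1}/(s_i s_k))] / [∏_{i≠k} (1 − s_i/s_k)(1 − 1/(s_i s_k))]. Then for any indices ℓ ≠ ℓ′, the residues of F in the variable s_ℓ at the points s_ℓ = s_{ℓ′} and s_ℓ = 1/s_{ℓ′} vanish: lim_{s_ℓ → s_{ℓ′}} F(s)·(s_ℓ − s_{ℓ′}) = 0 and lim_{s_ℓ → 1/s_{ℓ′}} F(s)·(s_ℓ − 1/s_{ℓ′}) = 0, the other variables being held fixed at generic values (nonzero, pairwise distinct, with s_i s_j ≠ 1 for the fixed indices, and with the limiting point s_{ℓ′}^{±1} distinct from all s_i^{±1}, i ≠ ℓ, ℓ′). Consequently, as a rational function of s_ℓ, F has no poles away from s_ℓ = 0 and s_ℓ = ∞. -/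

import Mathlib

open Filter Topology


open scoped BigOperators

noncomputable section

/-- The function `F` of the variable `s_ℓ = z` (the other `s_i` held fixed):
`F(s) = Σ_{k=1}^N s_k ∏_{i=1}^N (1 - Q_i s_i/s_k)(1 - Q_i⁻¹/(s_i s_k))
          / ∏_{i≠k} (1 - s_i/s_k)(1 - 1/(s_i s_k))`. -/
def FresB (N : ℕ) (Q s : ℕ → ℂ) (ℓ : ℕ) (z : ℂ) : ℂ :=
  ∑ k ∈ Finset.Icc 1 N,
    (if k = ℓ then z else s k) *
      ((∏ i ∈ Finset.Icc 1 N,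
          (1 - Q i * (if i = ℓ then z else s i) / (if k = ℓ then z else s k))
            * (1 - (Q i)⁻¹ / ((if i = ℓ then z else s i) * (if k = ℓ then z else s k))))
        / ∏ i ∈ (Finset.Icc 1 N).erase k,
            (1 - (if i = ℓ then z else s i) / (if k = ℓ then z else s k))
              * (1 - 1 / ((if i = ℓ then z else s i) * (if k = ℓ then z else s k))))

namespace ResVan

def sh (s : ℕ → ℂ) (ℓ : ℕ) (z : ℂ) (i : ℕ) : ℂ := if i = ℓ then z else s i

def nb (N : ℕ) (Q s : ℕ → ℂ) (ℓ : ℕ) (k : ℕ) (z : ℂ) : ℂ :=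
  ∏ i ∈ Finset.Icc 1 N,
    (1 - Q i * sh s ℓ z i / sh s ℓ z k) * (1 - (Q i)⁻¹ / (sh s ℓ z i * sh s ℓ z k))

def db (N : ℕ) (s : ℕ → ℂ) (ℓ : ℕ) (k : ℕ) (z : ℂ) : ℂ :=
  ∏ i ∈ (Finset.Icc 1 N).erase k,
    (1 - sh s ℓ z i / sh s ℓ z k) * (1 - 1 / (sh s ℓ z i * sh s ℓ z k))

lemma FresB_eq (N : ℕ) (Q s : ℕ → ℂ) (ℓ : ℕ) (z : ℂ) :
    FresB N Q s ℓ z = ∑ k ∈ Finset.Icc 1 N, sh s ℓ z k * (nb N Q s ℓ k z / db N s ℓ k z) := rfl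

variable {s : ℕ → ℂ} {ℓ : ℕ}

lemma sh_self (s : ℕ → ℂ) (ℓ : ℕ) (z : ℂ) : sh s ℓ z ℓ = z := if_pos rfl

lemma sh_of_ne {i : ℕ} (h : i ≠ ℓ) (z : ℂ) : sh s ℓ z i = s i := if_neg h

lemma sh_ne_zero {z₀ : ℂ} {i : ℕ} (h0 : z₀ ≠ 0) (hi : i ≠ ℓ → s i ≠ 0) : sh s ℓ z₀ i ≠ 0 := by
  unfold sh; split_ifs with h
  · exact h0
  · exact hi h

lemma cont_sh (i : ℕ) (z₀ : ℂ) : ContinuousAt (fun z => sh s ℓ z i) z₀ := by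
  by_cases h : i = ℓ
  · simp only [sh, h, if_pos rfl]; exact continuousAt_id
  · simp only [sh, if_neg h]; exact continuousAt_const

lemma diff_sh (i : ℕ) (z₀ : ℂ) : DifferentiableAt ℂ (fun z => sh s ℓ z i) z₀ := by
  by_cases h : i = ℓ
  · simp only [sh, h, if_pos rfl]; exact differentiableAt_id
  · simp only [sh, if_neg h]; exact differentiableAt_const _

lemma one_sub_div_ne {x y : ℂ} (hy : y ≠ 0) (h : x ≠ y) : (1 : ℂ) - x / y ≠ 0 := by
  rw [sub_ne_zero]; intro hxy
  exact h (by field_simp at hxy; simp [hxy])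

lemma one_sub_one_div_ne {x : ℂ} (h : x ≠ 1) : (1 : ℂ) - 1 / x ≠ 0 := by
  rcases eq_or_ne x 0 with rfl | hx
  · simp
  · rw [sub_ne_zero]; intro hxy
    exact h (by field_simp at hxy; simp [hxy])


/-- reduced product for the two singular terms -/
def pr (N : ℕ) (s : ℕ → ℂ) (ℓ ℓ' : ℕ) (z : ℂ) : ℂ :=
  ∏ i ∈ ((Finset.Icc 1 N).erase ℓ).erase ℓ', (1 - s i / z) * (1 - 1 / (s i * z))

def prc (N : ℕ) (s : ℕ → ℂ) (ℓ ℓ' : ℕ) (b : ℂ) : ℂ :=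
  ∏ i ∈ ((Finset.Icc 1 N).erase ℓ).erase ℓ', (1 - s i / b) * (1 - 1 / (s i * b))

lemma pr_eq_prc (N : ℕ) (ℓ ℓ' : ℕ) (b : ℂ) : pr N s ℓ ℓ' b = prc N s ℓ ℓ' b := rfl

lemma db_ell {N ℓ' : ℕ} (hℓ'I : ℓ' ∈ Finset.Icc 1 N) (hne' : ℓ' ≠ ℓ) (z : ℂ) :
    db N s ℓ ℓ z = ((1 - s ℓ' / z) * (1 - 1 / (s ℓ' * z))) * pr N s ℓ ℓ' z := by
  unfold db pr
  have hmem : ℓ' ∈ (Finset.Icc 1 N).erase ℓ := Finset.mem_erase.2 ⟨hne', hℓ'I⟩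
  rw [Finset.prod_congr rfl (fun i hi => ?_), ← Finset.mul_prod_erase _ _ hmem]
  rw [sh_of_ne (Finset.mem_erase.1 hi).1, sh_self]

lemma db_ell' {N ℓ' : ℕ} (hℓI : ℓ ∈ Finset.Icc 1 N) (hne : ℓ ≠ ℓ') (z : ℂ) :
    db N s ℓ ℓ' z = ((1 - z / s ℓ') * (1 - 1 / (z * s ℓ'))) * prc N s ℓ ℓ' (s ℓ') := by
  unfold db
  have hmem : ℓ ∈ (Finset.Icc 1 N).erase ℓ' := Finset.mem_erase.2 ⟨hne, hℓI⟩
  rw [← Finset.mul_prod_erase _ _ hmem, Finset.erase_right_comm]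
  congr 1
  · rw [sh_self, sh_of_ne (Ne.symm hne)]
  · unfold prc
    refine Finset.prod_congr rfl fun i hi => ?_
    have hiℓ : i ≠ ℓ := (Finset.mem_erase.1 ((Finset.mem_erase.1 hi).2)).1
    rw [sh_of_ne hiℓ, sh_of_ne (Ne.symm hne)]

lemma cont_pr {N ℓ' : ℕ} {a : ℂ} (ha0 : a ≠ 0)
    (hs : ∀ i ∈ ((Finset.Icc 1 N).erase ℓ).erase ℓ', s i ≠ 0) :
    ContinuousAt (pr N s ℓ ℓ') a := by
  unfold pr
  exact tendsto_finset_prod _ fun i hi =>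
    ((tendsto_const_nhds.sub (tendsto_const_nhds.div continuousAt_id ha0)).mul
      (tendsto_const_nhds.sub (tendsto_const_nhds.div (continuousAt_const.mul continuousAt_id)
        (mul_ne_zero (hs i hi) ha0))))

lemma pr_ne_zero {N ℓ' : ℕ} {a : ℂ}
    (hgen : ∀ i ∈ ((Finset.Icc 1 N).erase ℓ).erase ℓ', s i / a ≠ 1 ∧ s i * a ≠ 1) :
    pr N s ℓ ℓ' a ≠ 0 := by
  unfold pr
  rw [Finset.prod_ne_zero_iff]
  intro i hi
  obtain ⟨h1, h2⟩ := hgen i hi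
  exact mul_ne_zero (sub_ne_zero.2 (Ne.symm h1)) (sub_ne_zero.2 (fun h => h2 (by
    rcases eq_or_ne (s i * a) 0 with h0 | h0
    · rw [h0] at h; simp at h
    · rw [eq_div_iff h0] at h; linear_combination h)))

-- continuity of numerator
lemma cont_nb {N k : ℕ} {Q : ℕ → ℂ} {a : ℂ} (ha0 : a ≠ 0)
    (hs : ∀ i ∈ Finset.Icc 1 N, i ≠ ℓ → s i ≠ 0) (hk : k ≠ ℓ → s k ≠ 0) :
    ContinuousAt (nb N Q s ℓ k) a := by
  unfold nb
  exact tendsto_finset_prod _ fun i hi =>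
    ((tendsto_const_nhds.sub (((cont_sh i a).const_mul (Q i)).div (cont_sh k a)
        (sh_ne_zero ha0 hk))).mul
      (tendsto_const_nhds.sub (tendsto_const_nhds.div ((cont_sh i a).mul (cont_sh k a))
        (mul_ne_zero (sh_ne_zero ha0 (hs i hi)) (sh_ne_zero ha0 hk)))))

lemma cont_db {N k : ℕ} {a : ℂ} (ha0 : a ≠ 0)
    (hs : ∀ i ∈ Finset.Icc 1 N, i ≠ ℓ → s i ≠ 0) (hk : k ≠ ℓ → s k ≠ 0) :
    ContinuousAt (db N s ℓ k) a := by
  unfold db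
  exact tendsto_finset_prod _ fun i hi =>
    ((tendsto_const_nhds.sub ((cont_sh i a).div (cont_sh k a) (sh_ne_zero ha0 hk))).mul
      (tendsto_const_nhds.sub (tendsto_const_nhds.div ((cont_sh i a).mul (cont_sh k a))
        (mul_ne_zero (sh_ne_zero ha0 (hs i (Finset.mem_of_mem_erase hi))) (sh_ne_zero ha0 hk)))))

lemma db_ne_zero {N k : ℕ} {a : ℂ} (hk : k ≠ ℓ) (hk0 : s k ≠ 0)
    (hgen : ∀ i ∈ (Finset.Icc 1 N).erase k, sh s ℓ a i ≠ s k ∧ sh s ℓ a i * s k ≠ 1) :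
    db N s ℓ k a ≠ 0 := by
  unfold db
  rw [Finset.prod_ne_zero_iff]
  intro i hi
  obtain ⟨h1, h2⟩ := hgen i hi
  rw [sh_of_ne hk]
  exact mul_ne_zero (one_sub_div_ne hk0 h1) (one_sub_one_div_ne h2)



section sing
variable {N ℓ' : ℕ} {Q : ℕ → ℂ}

lemma alg1 {z b n u p : ℂ} (hz0 : z ≠ 0) (hzb : z - b ≠ 0) (hu : u ≠ 0) (hp : p ≠ 0) :
    z * (n / (((z - b) / z * u) * p)) * (z - b) = z ^ 2 * n / (u * p) := by
  field_simp

lemma alg2 {z b n u p : ℂ} (hb0 : b ≠ 0) (hzb : z - b ≠ 0) (hu : u ≠ 0) (hp : p ≠ 0) :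
    b * (n / ((-((z - b) / b) * u) * p)) * (z - b) = -(b ^ 2 * n / (u * p)) := by
  have hD : b * u * p - z * u * p ≠ 0 := fun h =>
    (mul_ne_zero (mul_ne_zero hzb hu) hp) (by linear_combination -h)
  have hD2 : (b - z) * u * p ≠ 0 :=
    mul_ne_zero (mul_ne_zero (fun h => hzb (by linear_combination -h)) hu) hp
  field_simp

lemma alg3 {z a n u p : ℂ} (hz0 : z ≠ 0) (hza : z - a ≠ 0) (hu : u ≠ 0) (hp : p ≠ 0) :
    z * (n / ((u * ((z - a) / z)) * p)) * (z - a) = z ^ 2 * n / (u * p) := by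
  field_simp

lemma alg4 {z a b n u p : ℂ} (hz0 : z ≠ 0) (hza : z - a ≠ 0) (hu : u ≠ 0) (hp : p ≠ 0) :
    b * (n / ((u * ((z - a) / z)) * p)) * (z - a) = b * z * n / (u * p) := by
  field_simp

/-- Case 1 (`a = s ℓ'`), singular term `k = ℓ`. -/
lemma sing_l_case1 (hℓ'I : ℓ' ∈ Finset.Icc 1 N) (hne' : ℓ' ≠ ℓ) (hb0 : s ℓ' ≠ 0)
    (hs : ∀ i ∈ Finset.Icc 1 N, i ≠ ℓ → s i ≠ 0)
    (hsJ : ∀ i ∈ ((Finset.Icc 1 N).erase ℓ).erase ℓ', s i ≠ 0)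
    (hW : (1 - 1 / (s ℓ' * s ℓ')) * pr N s ℓ ℓ' (s ℓ') ≠ 0) :
    Filter.Tendsto (fun z => sh s ℓ z ℓ * (nb N Q s ℓ ℓ z / db N s ℓ ℓ z) * (z - s ℓ'))
      (𝓝[≠] (s ℓ'))
      (𝓝 ((s ℓ') ^ 2 * nb N Q s ℓ ℓ (s ℓ') / ((1 - 1 / (s ℓ' * s ℓ')) * pr N s ℓ ℓ' (s ℓ')))) := by
  have hcW : ContinuousAt (fun z => (1 - 1 / (s ℓ' * z)) * pr N s ℓ ℓ' z) (s ℓ') :=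
    (tendsto_const_nhds.sub (tendsto_const_nhds.div (continuousAt_const.mul continuousAt_id)
      (mul_ne_zero hb0 hb0))).mul (cont_pr hb0 hsJ)
  have h1 : Filter.Tendsto
      (fun z => z ^ 2 * nb N Q s ℓ ℓ z / ((1 - 1 / (s ℓ' * z)) * pr N s ℓ ℓ' z))
      (𝓝[≠] (s ℓ'))
      (𝓝 ((s ℓ') ^ 2 * nb N Q s ℓ ℓ (s ℓ') /
        ((1 - 1 / (s ℓ' * s ℓ')) * pr N s ℓ ℓ' (s ℓ')))) :=
    (Filter.Tendsto.div ((continuousAt_id.pow 2).mul (cont_nb hb0 hs (fun h => (h rfl).elim)))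
      hcW hW).mono_left nhdsWithin_le_nhds
  refine h1.congr' ?_
  have hz0' : ∀ᶠ z in 𝓝[≠] (s ℓ'), z ≠ (0 : ℂ) := eventually_ne_nhdsWithin hb0
  have hWev : ∀ᶠ z in 𝓝[≠] (s ℓ'), (1 - 1 / (s ℓ' * z)) * pr N s ℓ ℓ' z ≠ 0 :=
    (hcW.eventually_ne hW).filter_mono nhdsWithin_le_nhds
  filter_upwards [self_mem_nhdsWithin, hz0', hWev] with z hz hz0 hWz
  have hzb : z ≠ s ℓ' := hz
  obtain ⟨hv, hpz⟩ := mul_ne_zero_iff.1 hWz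
  have hfac : (1 : ℂ) - s ℓ' / z = (z - s ℓ') / z := by field_simp
  rw [sh_self, db_ell hℓ'I hne', hfac]
  exact (alg1 hz0 (sub_ne_zero.2 hzb) hv hpz).symm

/-- Case 1 (`a = s ℓ'`), singular term `k = ℓ'`. -/
lemma sing_l'_case1 (hℓI : ℓ ∈ Finset.Icc 1 N) (hne : ℓ ≠ ℓ') (hb0 : s ℓ' ≠ 0)
    (hs : ∀ i ∈ Finset.Icc 1 N, i ≠ ℓ → s i ≠ 0)
    (hW : (1 - 1 / (s ℓ' * s ℓ')) * prc N s ℓ ℓ' (s ℓ') ≠ 0) :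
    Filter.Tendsto (fun z => sh s ℓ z ℓ' * (nb N Q s ℓ ℓ' z / db N s ℓ ℓ' z) * (z - s ℓ'))
      (𝓝[≠] (s ℓ'))
      (𝓝 (-((s ℓ') ^ 2 * nb N Q s ℓ ℓ' (s ℓ') /
        ((1 - 1 / (s ℓ' * s ℓ')) * prc N s ℓ ℓ' (s ℓ'))))) := by
  have hcW : ContinuousAt (fun z => (1 - 1 / (z * s ℓ')) * prc N s ℓ ℓ' (s ℓ')) (s ℓ') :=
    (tendsto_const_nhds.sub (tendsto_const_nhds.div (continuousAt_id.mul continuousAt_const)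
      (mul_ne_zero hb0 hb0))).mul continuousAt_const
  have h1 : Filter.Tendsto
      (fun z => -((s ℓ') ^ 2 * nb N Q s ℓ ℓ' z / ((1 - 1 / (z * s ℓ')) * prc N s ℓ ℓ' (s ℓ'))))
      (𝓝[≠] (s ℓ'))
      (𝓝 (-((s ℓ') ^ 2 * nb N Q s ℓ ℓ' (s ℓ') /
        ((1 - 1 / (s ℓ' * s ℓ')) * prc N s ℓ ℓ' (s ℓ'))))) :=
    ((Filter.Tendsto.div (tendsto_const_nhds.mul (cont_nb hb0 hs (fun _ => hb0)))
      hcW hW).neg).mono_left nhdsWithin_le_nhds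
  refine h1.congr' ?_
  have hz0' : ∀ᶠ z in 𝓝[≠] (s ℓ'), z ≠ (0 : ℂ) := eventually_ne_nhdsWithin hb0
  have hWev : ∀ᶠ z in 𝓝[≠] (s ℓ'), (1 - 1 / (z * s ℓ')) * prc N s ℓ ℓ' (s ℓ') ≠ 0 :=
    (hcW.eventually_ne hW).filter_mono nhdsWithin_le_nhds
  filter_upwards [self_mem_nhdsWithin, hz0', hWev] with z hz hz0 hWz
  have hzb : z ≠ s ℓ' := hz
  obtain ⟨hv, hpz⟩ := mul_ne_zero_iff.1 hWz
  have hfac : (1 : ℂ) - z / s ℓ' = -((z - s ℓ') / s ℓ') := by field_simp; ring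
  rw [sh_of_ne (Ne.symm hne), db_ell' hℓI hne, hfac]
  exact (alg2 hb0 (sub_ne_zero.2 hzb) hv hpz).symm

/-- Case 2 (`a = (s ℓ')⁻¹`), singular term `k = ℓ`. -/
lemma sing_l_case2 (hℓ'I : ℓ' ∈ Finset.Icc 1 N) (hne' : ℓ' ≠ ℓ) (hb0 : s ℓ' ≠ 0)
    (hs : ∀ i ∈ Finset.Icc 1 N, i ≠ ℓ → s i ≠ 0)
    (hsJ : ∀ i ∈ ((Finset.Icc 1 N).erase ℓ).erase ℓ', s i ≠ 0)
    (hW : (1 - s ℓ' / (s ℓ')⁻¹) * pr N s ℓ ℓ' ((s ℓ')⁻¹) ≠ 0) :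
    Filter.Tendsto (fun z => sh s ℓ z ℓ * (nb N Q s ℓ ℓ z / db N s ℓ ℓ z) * (z - (s ℓ')⁻¹))
      (𝓝[≠] ((s ℓ')⁻¹))
      (𝓝 (((s ℓ')⁻¹) ^ 2 * nb N Q s ℓ ℓ ((s ℓ')⁻¹) /
        ((1 - s ℓ' / (s ℓ')⁻¹) * pr N s ℓ ℓ' ((s ℓ')⁻¹)))) := by
  have ha0 : (s ℓ')⁻¹ ≠ 0 := inv_ne_zero hb0
  have hcW : ContinuousAt (fun z => (1 - s ℓ' / z) * pr N s ℓ ℓ' z) ((s ℓ')⁻¹) :=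
    (tendsto_const_nhds.sub (tendsto_const_nhds.div continuousAt_id ha0)).mul (cont_pr ha0 hsJ)
  have h1 : Filter.Tendsto
      (fun z => z ^ 2 * nb N Q s ℓ ℓ z / ((1 - s ℓ' / z) * pr N s ℓ ℓ' z))
      (𝓝[≠] ((s ℓ')⁻¹))
      (𝓝 (((s ℓ')⁻¹) ^ 2 * nb N Q s ℓ ℓ ((s ℓ')⁻¹) /
        ((1 - s ℓ' / (s ℓ')⁻¹) * pr N s ℓ ℓ' ((s ℓ')⁻¹)))) :=
    (Filter.Tendsto.div ((continuousAt_id.pow 2).mul (cont_nb ha0 hs (fun h => (h rfl).elim)))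
      hcW hW).mono_left nhdsWithin_le_nhds
  refine h1.congr' ?_
  have hz0' : ∀ᶠ z in 𝓝[≠] ((s ℓ')⁻¹), z ≠ (0 : ℂ) := eventually_ne_nhdsWithin ha0
  have hWev : ∀ᶠ z in 𝓝[≠] ((s ℓ')⁻¹), (1 - s ℓ' / z) * pr N s ℓ ℓ' z ≠ 0 :=
    (hcW.eventually_ne hW).filter_mono nhdsWithin_le_nhds
  filter_upwards [self_mem_nhdsWithin, hz0', hWev] with z hz hz0 hWz
  have hza : z ≠ (s ℓ')⁻¹ := hz
  obtain ⟨hv, hpz⟩ := mul_ne_zero_iff.1 hWz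
  have hfac : (1 : ℂ) - 1 / (s ℓ' * z) = (z - (s ℓ')⁻¹) / z := by
    field_simp
  rw [sh_self, db_ell hℓ'I hne', hfac]
  exact (alg3 hz0 (sub_ne_zero.2 hza) hv hpz).symm

/-- Case 2 (`a = (s ℓ')⁻¹`), singular term `k = ℓ'`. -/
lemma sing_l'_case2 (hℓI : ℓ ∈ Finset.Icc 1 N) (hne : ℓ ≠ ℓ') (hb0 : s ℓ' ≠ 0)
    (hs : ∀ i ∈ Finset.Icc 1 N, i ≠ ℓ → s i ≠ 0)
    (hW : (1 - (s ℓ')⁻¹ / s ℓ') * prc N s ℓ ℓ' (s ℓ') ≠ 0) :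
    Filter.Tendsto (fun z => sh s ℓ z ℓ' * (nb N Q s ℓ ℓ' z / db N s ℓ ℓ' z) * (z - (s ℓ')⁻¹))
      (𝓝[≠] ((s ℓ')⁻¹))
      (𝓝 (s ℓ' * (s ℓ')⁻¹ * nb N Q s ℓ ℓ' ((s ℓ')⁻¹) /
        ((1 - (s ℓ')⁻¹ / s ℓ') * prc N s ℓ ℓ' (s ℓ')))) := by
  have ha0 : (s ℓ')⁻¹ ≠ 0 := inv_ne_zero hb0
  have hcW : ContinuousAt (fun z => (1 - z / s ℓ') * prc N s ℓ ℓ' (s ℓ')) ((s ℓ')⁻¹) :=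
    (tendsto_const_nhds.sub (continuousAt_id.div continuousAt_const hb0)).mul continuousAt_const
  have h1 : Filter.Tendsto
      (fun z => s ℓ' * z * nb N Q s ℓ ℓ' z / ((1 - z / s ℓ') * prc N s ℓ ℓ' (s ℓ')))
      (𝓝[≠] ((s ℓ')⁻¹))
      (𝓝 (s ℓ' * (s ℓ')⁻¹ * nb N Q s ℓ ℓ' ((s ℓ')⁻¹) /
        ((1 - (s ℓ')⁻¹ / s ℓ') * prc N s ℓ ℓ' (s ℓ')))) :=
    (Filter.Tendsto.div ((continuousAt_const.mul continuousAt_id).mul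
        (cont_nb ha0 hs (fun _ => hb0)))
      hcW hW).mono_left nhdsWithin_le_nhds
  refine h1.congr' ?_
  have hz0' : ∀ᶠ z in 𝓝[≠] ((s ℓ')⁻¹), z ≠ (0 : ℂ) := eventually_ne_nhdsWithin ha0
  have hWev : ∀ᶠ z in 𝓝[≠] ((s ℓ')⁻¹), (1 - z / s ℓ') * prc N s ℓ ℓ' (s ℓ') ≠ 0 :=
    (hcW.eventually_ne hW).filter_mono nhdsWithin_le_nhds
  filter_upwards [self_mem_nhdsWithin, hz0', hWev] with z hz hz0 hWz
  have hza : z ≠ (s ℓ')⁻¹ := hz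
  obtain ⟨hv, hpz⟩ := mul_ne_zero_iff.1 hWz
  have hfac : (1 : ℂ) - 1 / (z * s ℓ') = (z - (s ℓ')⁻¹) / z := by
    field_simp
    try ring
    try tauto
  rw [sh_of_ne (Ne.symm hne), db_ell' hℓI hne, hfac]
  exact (alg4 hz0 (sub_ne_zero.2 hza) hv hpz).symm
end sing

/-- generic regular term times `(z - a)` tends to `0`. -/
lemma generic_tendsto {N k : ℕ} {Q : ℕ → ℂ} {a : ℂ} (ha0 : a ≠ 0)
    (hs : ∀ i ∈ Finset.Icc 1 N, i ≠ ℓ → s i ≠ 0) (hk : k ≠ ℓ) (hk0 : s k ≠ 0)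
    (hgen : ∀ i ∈ (Finset.Icc 1 N).erase k, sh s ℓ a i ≠ s k ∧ sh s ℓ a i * s k ≠ 1) :
    Filter.Tendsto (fun z => sh s ℓ z k * (nb N Q s ℓ k z / db N s ℓ k z) * (z - a))
      (𝓝[≠] a) (𝓝 0) := by
  have hdb := db_ne_zero hk hk0 hgen
  have h1 : Filter.Tendsto (fun z => sh s ℓ z k * (nb N Q s ℓ k z / db N s ℓ k z)) (𝓝 a)
      (𝓝 (sh s ℓ a k * (nb N Q s ℓ k a / db N s ℓ k a))) :=
    (cont_sh k a).mul ((cont_nb ha0 hs fun _ => hk0).div (cont_db ha0 hs fun _ => hk0) hdb)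
  have h2 : Filter.Tendsto (fun z : ℂ => z - a) (𝓝 a) (𝓝 0) := by
    simpa using tendsto_id.sub (tendsto_const_nhds : Filter.Tendsto (fun _ : ℂ => a) (𝓝 a) _)
  simpa using ((h1.mul h2).mono_left nhdsWithin_le_nhds)

/-- at `z = s ℓ'` the two singular numerators agree -/
lemma nb_eq {N ℓ' : ℕ} {Q : ℕ → ℂ} (hne' : ℓ' ≠ ℓ) :
    nb N Q s ℓ ℓ (s ℓ') = nb N Q s ℓ ℓ' (s ℓ') := by
  unfold nb
  refine Finset.prod_congr rfl fun i _ => ?_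
  rw [sh_self, sh_of_ne hne']

lemma keyfac {q u b : ℂ} (hq : q ≠ 0) (hu : u ≠ 0) (hb : b ≠ 0) :
    (1 - q * u / b⁻¹) * (1 - q⁻¹ / (u * b⁻¹)) =
      b ^ 2 * ((1 - q * u / b) * (1 - q⁻¹ / (u * b))) := by
  field_simp
  ring

lemma prfac {u b : ℂ} (hu : u ≠ 0) (hb : b ≠ 0) :
    (1 - u / b⁻¹) * (1 - 1 / (u * b⁻¹)) = b ^ 2 * ((1 - u / b) * (1 - 1 / (u * b))) := by
  field_simp
  ring

lemma nb_case2 {N ℓ' : ℕ} {Q : ℕ → ℂ} (hne' : ℓ' ≠ ℓ) (hb0 : s ℓ' ≠ 0)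
    (hQ : ∀ i ∈ Finset.Icc 1 N, Q i ≠ 0)
    (hs : ∀ i ∈ Finset.Icc 1 N, i ≠ ℓ → s i ≠ 0) :
    nb N Q s ℓ ℓ ((s ℓ')⁻¹) =
      ((s ℓ') ^ 2) ^ (Finset.Icc 1 N).card * nb N Q s ℓ ℓ' ((s ℓ')⁻¹) := by
  have ha0 : (s ℓ')⁻¹ ≠ 0 := inv_ne_zero hb0
  unfold nb
  rw [← Finset.prod_const (((s ℓ') ^ 2 : ℂ)), ← Finset.prod_mul_distrib]
  refine Finset.prod_congr rfl fun i hi => ?_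
  rw [sh_self, sh_of_ne hne']
  exact keyfac (hQ i hi) (sh_ne_zero ha0 (hs i hi)) hb0

lemma pr_case2 {N ℓ' : ℕ} (hb0 : s ℓ' ≠ 0)
    (hsJ : ∀ i ∈ ((Finset.Icc 1 N).erase ℓ).erase ℓ', s i ≠ 0) :
    pr N s ℓ ℓ' ((s ℓ')⁻¹) =
      ((s ℓ') ^ 2) ^ (((Finset.Icc 1 N).erase ℓ).erase ℓ').card * prc N s ℓ ℓ' (s ℓ') := by
  unfold pr prc
  rw [← Finset.prod_const (((s ℓ') ^ 2 : ℂ)), ← Finset.prod_mul_distrib]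
  exact Finset.prod_congr rfl fun i hi => prfac (hsJ i hi) hb0

lemma res2 {b X P : ℂ} (hb : b ≠ 0) (hbb : b * b ≠ 1) (hP : P ≠ 0) (m : ℕ) :
    (b⁻¹) ^ 2 * ((b ^ 2) ^ (m + 2) * X) / ((1 - b / b⁻¹) * ((b ^ 2) ^ m * P)) +
      b * b⁻¹ * X / ((1 - b⁻¹ / b) * P) = 0 := by
  have hc : (b : ℂ) * b ≠ 0 := mul_ne_zero hb hb
  have e1 : (b : ℂ) / b⁻¹ = b * b := by field_simp
  have e2 : (b : ℂ)⁻¹ / b = (b * b)⁻¹ := by rw [div_eq_mul_inv, ← mul_inv]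
  have h1 : (1 : ℂ) - b / b⁻¹ ≠ 0 := by
    rw [e1]; exact sub_ne_zero.2 fun h => hbb h.symm
  have h2 : (1 : ℂ) - b⁻¹ / b ≠ 0 := by
    rw [e2, sub_ne_zero]
    intro h
    apply hbb
    field_simp at h
    linear_combination h
  have hpow : ((b : ℂ) ^ 2) ^ m ≠ 0 := pow_ne_zero _ (pow_ne_zero _ hb)
  rw [div_add_div _ _ (mul_ne_zero h1 (mul_ne_zero hpow hP)) (mul_ne_zero h2 hP),
    div_eq_zero_iff]
  left
  rw [e1, e2]
  field_simp
  ring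

/-- If `z ≠ b` then `1 - b/z ≠ 0`. -/
lemma vanA {b z : ℂ} (h : z ≠ b) : (1 : ℂ) - b / z ≠ 0 := by
  rcases eq_or_ne z 0 with rfl | hz0
  · simp
  · exact one_sub_div_ne hz0 fun hbz => h (hbz ▸ rfl)

/-- If `z ≠ b⁻¹` then `1 - 1/(b*z) ≠ 0`. -/
lemma vanB {b z : ℂ} (h : z ≠ b⁻¹) : (1 : ℂ) - 1 / (b * z) ≠ 0 := by
  refine one_sub_one_div_ne fun hbz => h ?_
  have hb0 : b ≠ 0 := fun h0 => by simp [h0] at hbz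
  field_simp [eq_comm]
  linear_combination hbz

lemma vanB' {b z : ℂ} (h : z ≠ b⁻¹) : (1 : ℂ) - 1 / (z * b) ≠ 0 := by
  rw [mul_comm]; exact vanB h

/-- `F` is differentiable wherever `z ≠ 0` and all denominators are nonzero. -/
lemma diff_F {N : ℕ} {Q : ℕ → ℂ} {z : ℂ} (hz0 : z ≠ 0)
    (hs : ∀ i ∈ Finset.Icc 1 N, i ≠ ℓ → s i ≠ 0)
    (hdb : ∀ k ∈ Finset.Icc 1 N, db N s ℓ k z ≠ 0) :
    DifferentiableAt ℂ (FresB N Q s ℓ) z := by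
  have hF : FresB N Q s ℓ = fun z => ∑ k ∈ Finset.Icc 1 N,
      sh s ℓ z k * (nb N Q s ℓ k z / db N s ℓ k z) := funext (FresB_eq N Q s ℓ)
  rw [hF]
  refine DifferentiableAt.fun_sum fun k hk => ?_
  have hs' : ∀ i ∈ Finset.Icc 1 N, sh s ℓ z i ≠ 0 := fun i hi => sh_ne_zero hz0 (hs i hi)
  have hnb : DifferentiableAt ℂ (nb N Q s ℓ k) z := by
    unfold nb
    refine DifferentiableAt.fun_finsetProd fun i hi => ?_
    exact ((differentiableAt_const _).sub (((differentiableAt_const _).mul (diff_sh i z)).div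
        (diff_sh k z) (hs' k hk))).mul
      ((differentiableAt_const _).sub ((differentiableAt_const _).div
        ((diff_sh i z).mul (diff_sh k z)) (mul_ne_zero (hs' i hi) (hs' k hk))))
  have hdbd : DifferentiableAt ℂ (db N s ℓ k) z := by
    unfold db
    refine DifferentiableAt.fun_finsetProd fun i hi => ?_
    exact ((differentiableAt_const _).sub ((diff_sh i z).div (diff_sh k z) (hs' k hk))).mul
      ((differentiableAt_const _).sub ((differentiableAt_const _).div
        ((diff_sh i z).mul (diff_sh k z))
        (mul_ne_zero (hs' i (Finset.mem_of_mem_erase hi)) (hs' k hk))))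
  exact (diff_sh k z).mul (hnb.div hdbd (hdb k hk))

/-- Removable singularity: finite limit exists. -/
lemma exists_lim {N : ℕ} {Q : ℕ → ℂ} {a : ℂ}
    (h0 : Filter.Tendsto (fun z => FresB N Q s ℓ z * (z - a)) (𝓝[≠] a) (𝓝 0))
    (hdiff : ∀ᶠ z in 𝓝[≠] a, DifferentiableAt ℂ (FresB N Q s ℓ) z) :
    ∃ L : ℂ, Filter.Tendsto (fun z : ℂ => FresB N Q s ℓ z) (𝓝[≠] a) (𝓝 L) := by
  have ho : (fun z => FresB N Q s ℓ z - FresB N Q s ℓ a) =o[𝓝[≠] a] fun z => (z - a)⁻¹ := by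
    rw [Asymptotics.isLittleO_iff_tendsto']
    · have hz : Filter.Tendsto (fun z : ℂ => z - a) (𝓝[≠] a) (𝓝 0) := by
        have := (tendsto_id.sub (tendsto_const_nhds : Filter.Tendsto (fun _ : ℂ => a) (𝓝 a) _))
        simpa using this.mono_left nhdsWithin_le_nhds
      have h2 : Filter.Tendsto (fun z => FresB N Q s ℓ a * (z - a)) (𝓝[≠] a) (𝓝 0) := by
        simpa using tendsto_const_nhds.mul hz
      have h3 := h0.sub h2
      rw [sub_zero] at h3
      refine h3.congr fun z => ?_
      rw [div_eq_mul_inv, inv_inv, sub_mul]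
    · filter_upwards [self_mem_nhdsWithin] with z hz h
      exact absurd h (inv_ne_zero (sub_ne_zero.2 hz))
  exact ⟨_, Complex.tendsto_limUnder_of_differentiable_on_punctured_nhds_of_isLittleO hdiff ho⟩

section evdb
variable {N ℓ' : ℕ}

/-- common part: eventual nonvanishing of denominators for the regular terms -/
lemma ev_db_generic {a : ℂ} (ha0 : a ≠ 0)
    (hs : ∀ i ∈ Finset.Icc 1 N, i ≠ ℓ → s i ≠ 0)
    {k : ℕ} (hk : k ≠ ℓ) (hk0 : s k ≠ 0)
    (hgen : ∀ i ∈ (Finset.Icc 1 N).erase k, sh s ℓ a i ≠ s k ∧ sh s ℓ a i * s k ≠ 1) :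
    ∀ᶠ z in 𝓝[≠] a, db N s ℓ k z ≠ 0 :=
  (((cont_db ha0 hs fun _ => hk0).eventually_ne
    (db_ne_zero hk hk0 hgen))).filter_mono nhdsWithin_le_nhds

lemma ev_db_case1 (hℓI : ℓ ∈ Finset.Icc 1 N) (hℓ'I : ℓ' ∈ Finset.Icc 1 N) (hne : ℓ ≠ ℓ')
    (hs : ∀ i ∈ Finset.Icc 1 N, i ≠ ℓ → s i ≠ 0)
    (hbb : s ℓ' * s ℓ' ≠ 1)
    (hsJ : ∀ i ∈ ((Finset.Icc 1 N).erase ℓ).erase ℓ', s i ≠ 0)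
    (hpr : pr N s ℓ ℓ' (s ℓ') ≠ 0)
    (hgen : ∀ k ∈ Finset.Icc 1 N, k ≠ ℓ → k ≠ ℓ' →
      ∀ i ∈ (Finset.Icc 1 N).erase k, sh s ℓ (s ℓ') i ≠ s k ∧ sh s ℓ (s ℓ') i * s k ≠ 1) :
    ∀ᶠ z in 𝓝[≠] (s ℓ'), ∀ k ∈ Finset.Icc 1 N, db N s ℓ k z ≠ 0 := by
  have hb0 : s ℓ' ≠ 0 := hs ℓ' hℓ'I (Ne.symm hne)
  rw [eventually_all_finset]
  intro k hk
  by_cases hkl : k = ℓ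
  · rw [hkl]
    have hc2 : ContinuousAt (fun z : ℂ => 1 - 1 / (s ℓ' * z)) (s ℓ') :=
      tendsto_const_nhds.sub (tendsto_const_nhds.div
        (continuousAt_const.mul continuousAt_id) (mul_ne_zero hb0 hb0))
    have ev2 : ∀ᶠ z in 𝓝[≠] (s ℓ'), (1 : ℂ) - 1 / (s ℓ' * z) ≠ 0 :=
      (hc2.eventually_ne (one_sub_one_div_ne hbb)).filter_mono nhdsWithin_le_nhds
    have ev3 : ∀ᶠ z in 𝓝[≠] (s ℓ'), pr N s ℓ ℓ' z ≠ 0 :=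
      ((cont_pr hb0 hsJ).eventually_ne hpr).filter_mono nhdsWithin_le_nhds
    filter_upwards [self_mem_nhdsWithin, ev2, ev3] with z hz h2 h3
    rw [db_ell hℓ'I (Ne.symm hne)]
    exact mul_ne_zero (mul_ne_zero (vanA hz) h2) h3
  · by_cases hkl' : k = ℓ'
    · rw [hkl']
      have hc2 : ContinuousAt (fun z : ℂ => 1 - 1 / (z * s ℓ')) (s ℓ') :=
        tendsto_const_nhds.sub (tendsto_const_nhds.div
          (continuousAt_id.mul continuousAt_const) (mul_ne_zero hb0 hb0))
      have ev2 : ∀ᶠ z in 𝓝[≠] (s ℓ'), (1 : ℂ) - 1 / (z * s ℓ') ≠ 0 :=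
        (hc2.eventually_ne (by
          rw [mul_comm (s ℓ') (s ℓ')] at hbb
          exact one_sub_one_div_ne hbb)).filter_mono nhdsWithin_le_nhds
      have hprc : prc N s ℓ ℓ' (s ℓ') ≠ 0 := hpr
      filter_upwards [self_mem_nhdsWithin, ev2] with z hz h2
      rw [db_ell' hℓI hne]
      exact mul_ne_zero (mul_ne_zero (one_sub_div_ne hb0 hz) h2) hprc
    · exact ev_db_generic hb0 hs hkl (hs k hk hkl) (hgen k hk hkl hkl')

lemma ev_db_case2 (hℓI : ℓ ∈ Finset.Icc 1 N) (hℓ'I : ℓ' ∈ Finset.Icc 1 N) (hne : ℓ ≠ ℓ')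
    (hs : ∀ i ∈ Finset.Icc 1 N, i ≠ ℓ → s i ≠ 0)
    (hbb : s ℓ' * s ℓ' ≠ 1)
    (hsJ : ∀ i ∈ ((Finset.Icc 1 N).erase ℓ).erase ℓ', s i ≠ 0)
    (hpr : pr N s ℓ ℓ' ((s ℓ')⁻¹) ≠ 0)
    (hprc : prc N s ℓ ℓ' (s ℓ') ≠ 0)
    (hgen : ∀ k ∈ Finset.Icc 1 N, k ≠ ℓ → k ≠ ℓ' →
      ∀ i ∈ (Finset.Icc 1 N).erase k,
        sh s ℓ ((s ℓ')⁻¹) i ≠ s k ∧ sh s ℓ ((s ℓ')⁻¹) i * s k ≠ 1) :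
    ∀ᶠ z in 𝓝[≠] ((s ℓ')⁻¹), ∀ k ∈ Finset.Icc 1 N, db N s ℓ k z ≠ 0 := by
  have hb0 : s ℓ' ≠ 0 := hs ℓ' hℓ'I (Ne.symm hne)
  have ha0 : (s ℓ')⁻¹ ≠ 0 := inv_ne_zero hb0
  have hba : s ℓ' ≠ (s ℓ')⁻¹ := by
    intro h
    apply hbb
    field_simp at h
    linear_combination h
  rw [eventually_all_finset]
  intro k hk
  by_cases hkl : k = ℓ
  · rw [hkl]
    have hc1 : ContinuousAt (fun z : ℂ => 1 - s ℓ' / z) ((s ℓ')⁻¹) :=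
      tendsto_const_nhds.sub (tendsto_const_nhds.div continuousAt_id ha0)
    have ev1 : ∀ᶠ z in 𝓝[≠] ((s ℓ')⁻¹), (1 : ℂ) - s ℓ' / z ≠ 0 :=
      (hc1.eventually_ne (one_sub_div_ne ha0 hba)).filter_mono nhdsWithin_le_nhds
    have ev3 : ∀ᶠ z in 𝓝[≠] ((s ℓ')⁻¹), pr N s ℓ ℓ' z ≠ 0 :=
      ((cont_pr ha0 hsJ).eventually_ne hpr).filter_mono nhdsWithin_le_nhds
    filter_upwards [self_mem_nhdsWithin, ev1, ev3] with z hz h1 h3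
    rw [db_ell hℓ'I (Ne.symm hne)]
    exact mul_ne_zero (mul_ne_zero h1 (vanB hz)) h3
  · by_cases hkl' : k = ℓ'
    · rw [hkl']
      have hab : (s ℓ')⁻¹ ≠ s ℓ' := fun h => hba h.symm
      have hc1 : ContinuousAt (fun z : ℂ => 1 - z / s ℓ') ((s ℓ')⁻¹) :=
        tendsto_const_nhds.sub (continuousAt_id.div continuousAt_const hb0)
      have ev1 : ∀ᶠ z in 𝓝[≠] ((s ℓ')⁻¹), (1 : ℂ) - z / s ℓ' ≠ 0 :=
        (hc1.eventually_ne (one_sub_div_ne hb0 hab)).filter_mono nhdsWithin_le_nhds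
      filter_upwards [self_mem_nhdsWithin, ev1] with z hz h1
      rw [db_ell' hℓI hne]
      exact mul_ne_zero (mul_ne_zero h1 (vanB' hz)) hprc
    · exact ev_db_generic ha0 hs hkl (hs k hk hkl) (hgen k hk hkl hkl')
end evdb

section main
variable {N ℓ' : ℕ} {Q : ℕ → ℂ}

lemma hsJ_of (hs0 : ∀ i ∈ Finset.Icc 1 N, i ≠ ℓ → s i ≠ 0) :
    ∀ i ∈ ((Finset.Icc 1 N).erase ℓ).erase ℓ', s i ≠ 0 := fun i hi => by
  have h2 := Finset.mem_erase.1 ((Finset.mem_erase.1 hi).2)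
  exact hs0 i h2.2 h2.1

lemma part1_case1 (hℓ : ℓ ∈ Finset.Icc 1 N) (hℓ' : ℓ' ∈ Finset.Icc 1 N) (hne : ℓ ≠ ℓ')
    (hQ : ∀ i ∈ Finset.Icc 1 N, Q i ≠ 0)
    (hs0 : ∀ i ∈ Finset.Icc 1 N, i ≠ ℓ → s i ≠ 0)
    (hd : ∀ i ∈ Finset.Icc 1 N, ∀ j ∈ Finset.Icc 1 N, i ≠ ℓ → j ≠ ℓ → i ≠ j → s i ≠ s j)
    (hp : ∀ i ∈ Finset.Icc 1 N, ∀ j ∈ Finset.Icc 1 N, i ≠ ℓ → j ≠ ℓ → s i * s j ≠ 1) :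
    Filter.Tendsto (fun z : ℂ => FresB N Q s ℓ z * (z - s ℓ'))
      (𝓝[≠] (s ℓ')) (𝓝 0) := by
  have hne' : ℓ' ≠ ℓ := Ne.symm hne
  have hb0 : s ℓ' ≠ 0 := hs0 ℓ' hℓ' hne'
  have hbb : s ℓ' * s ℓ' ≠ 1 := hp ℓ' hℓ' ℓ' hℓ' hne' hne'
  have hsJ := hsJ_of (ℓ' := ℓ') hs0
  have hpr : pr N s ℓ ℓ' (s ℓ') ≠ 0 := by
    refine pr_ne_zero fun i hi => ?_
    have h1 := Finset.mem_erase.1 hi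
    have h2 := Finset.mem_erase.1 h1.2
    refine ⟨fun h => hd i h2.2 ℓ' hℓ' h2.1 hne' h1.1 ((div_eq_one_iff_eq hb0).1 h),
      hp i h2.2 ℓ' hℓ' h2.1 hne'⟩
  have hW : (1 - 1 / (s ℓ' * s ℓ')) * pr N s ℓ ℓ' (s ℓ') ≠ 0 :=
    mul_ne_zero (one_sub_one_div_ne hbb) hpr
  have hWc : (1 - 1 / (s ℓ' * s ℓ')) * prc N s ℓ ℓ' (s ℓ') ≠ 0 := by
    rw [← pr_eq_prc]; exact hW
  have hLsum : (∑ k ∈ Finset.Icc 1 N, (if k = ℓ then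
        (s ℓ') ^ 2 * nb N Q s ℓ ℓ (s ℓ') / ((1 - 1 / (s ℓ' * s ℓ')) * pr N s ℓ ℓ' (s ℓ'))
      else if k = ℓ' then
        -((s ℓ') ^ 2 * nb N Q s ℓ ℓ (s ℓ') / ((1 - 1 / (s ℓ' * s ℓ')) * pr N s ℓ ℓ' (s ℓ')))
      else 0)) = 0 := by
    have hmem' : ℓ' ∈ (Finset.Icc 1 N).erase ℓ := Finset.mem_erase.2 ⟨hne', hℓ'⟩
    rw [← Finset.add_sum_erase _ _ hℓ, ← Finset.add_sum_erase _ _ hmem']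
    rw [if_pos rfl, if_neg hne', if_pos rfl]
    rw [Finset.sum_eq_zero (fun i hi => ?_)]
    · ring
    · have h1 := Finset.mem_erase.1 hi
      have h2 := Finset.mem_erase.1 h1.2
      rw [if_neg h2.1, if_neg h1.1]
  have hts : Filter.Tendsto (fun z =>
      ∑ k ∈ Finset.Icc 1 N, sh s ℓ z k * (nb N Q s ℓ k z / db N s ℓ k z) * (z - s ℓ'))
      (𝓝[≠] (s ℓ')) (𝓝 0) := by
    rw [← hLsum]
    refine tendsto_finset_sum _ fun k hk => ?_
    by_cases hkl : k = ℓ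
    · rw [hkl, if_pos rfl]
      exact sing_l_case1 hℓ' hne' hb0 hs0 hsJ hW
    · rw [if_neg hkl]
      by_cases hkl' : k = ℓ'
      · rw [hkl', if_pos rfl, nb_eq hne', pr_eq_prc]
        exact sing_l'_case1 hℓ hne hb0 hs0 hWc
      · rw [if_neg hkl']
        refine generic_tendsto hb0 hs0 hkl (hs0 k hk hkl) fun i hi => ?_
        have hik : i ≠ k := (Finset.mem_erase.1 hi).1
        have hiI : i ∈ Finset.Icc 1 N := Finset.mem_of_mem_erase hi
        by_cases hil : i = ℓ
        · rw [hil, sh_self]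
          exact ⟨hd ℓ' hℓ' k hk hne' hkl (fun h => hkl' h.symm), hp ℓ' hℓ' k hk hne' hkl⟩
        · rw [sh_of_ne hil]
          exact ⟨hd i hiI k hk hil hkl hik, hp i hiI k hk hil hkl⟩
  refine hts.congr fun z => ?_
  rw [FresB_eq, Finset.sum_mul]

lemma part1_case2 (hℓ : ℓ ∈ Finset.Icc 1 N) (hℓ' : ℓ' ∈ Finset.Icc 1 N) (hne : ℓ ≠ ℓ')
    (hQ : ∀ i ∈ Finset.Icc 1 N, Q i ≠ 0)
    (hs0 : ∀ i ∈ Finset.Icc 1 N, i ≠ ℓ → s i ≠ 0)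
    (hd : ∀ i ∈ Finset.Icc 1 N, ∀ j ∈ Finset.Icc 1 N, i ≠ ℓ → j ≠ ℓ → i ≠ j → s i ≠ s j)
    (hp : ∀ i ∈ Finset.Icc 1 N, ∀ j ∈ Finset.Icc 1 N, i ≠ ℓ → j ≠ ℓ → s i * s j ≠ 1) :
    Filter.Tendsto (fun z : ℂ => FresB N Q s ℓ z * (z - (s ℓ')⁻¹))
      (𝓝[≠] ((s ℓ')⁻¹)) (𝓝 0) := by
  have hne' : ℓ' ≠ ℓ := Ne.symm hne
  have hb0 : s ℓ' ≠ 0 := hs0 ℓ' hℓ' hne'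
  have ha0 : (s ℓ')⁻¹ ≠ 0 := inv_ne_zero hb0
  have hbb : s ℓ' * s ℓ' ≠ 1 := hp ℓ' hℓ' ℓ' hℓ' hne' hne'
  have hsJ := hsJ_of (ℓ' := ℓ') hs0
  have hprc : prc N s ℓ ℓ' (s ℓ') ≠ 0 := by
    rw [← pr_eq_prc]
    refine pr_ne_zero fun i hi => ?_
    have h1 := Finset.mem_erase.1 hi
    have h2 := Finset.mem_erase.1 h1.2
    refine ⟨fun h => hd i h2.2 ℓ' hℓ' h2.1 hne' h1.1 ((div_eq_one_iff_eq hb0).1 h),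
      hp i h2.2 ℓ' hℓ' h2.1 hne'⟩
  have hpra : pr N s ℓ ℓ' ((s ℓ')⁻¹) ≠ 0 := by
    refine pr_ne_zero fun i hi => ?_
    have h1 := Finset.mem_erase.1 hi
    have h2 := Finset.mem_erase.1 h1.2
    constructor
    · have he : s i / (s ℓ')⁻¹ = s i * s ℓ' := by field_simp
      rw [he]
      exact hp i h2.2 ℓ' hℓ' h2.1 hne'
    · intro h
      apply hd i h2.2 ℓ' hℓ' h2.1 hne' h1.1
      field_simp at h
      exact h
  have hden1 : (1 : ℂ) - s ℓ' / (s ℓ')⁻¹ ≠ 0 := by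
    have he : s ℓ' / (s ℓ')⁻¹ = s ℓ' * s ℓ' := by field_simp
    rw [he]
    exact sub_ne_zero.2 fun h => hbb h.symm
  have hden2 : (1 : ℂ) - (s ℓ')⁻¹ / s ℓ' ≠ 0 := by
    have he : (s ℓ')⁻¹ / s ℓ' = (s ℓ' * s ℓ')⁻¹ := by rw [div_eq_mul_inv, ← mul_inv]
    rw [he]
    refine sub_ne_zero.2 fun h => hbb ?_
    field_simp at h
    linear_combination h
  have hW1 : (1 - s ℓ' / (s ℓ')⁻¹) * pr N s ℓ ℓ' ((s ℓ')⁻¹) ≠ 0 := mul_ne_zero hden1 hpra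
  have hW2 : (1 - (s ℓ')⁻¹ / s ℓ') * prc N s ℓ ℓ' (s ℓ') ≠ 0 := mul_ne_zero hden2 hprc
  have hmem' : ℓ' ∈ (Finset.Icc 1 N).erase ℓ := Finset.mem_erase.2 ⟨hne', hℓ'⟩
  have hcard : (Finset.Icc 1 N).card = (((Finset.Icc 1 N).erase ℓ).erase ℓ').card + 2 := by
    have e1 := Finset.card_erase_add_one hℓ
    have e2 := Finset.card_erase_add_one hmem'
    omega
  have hLsum : (∑ k ∈ Finset.Icc 1 N, (if k = ℓ then
        ((s ℓ')⁻¹) ^ 2 * nb N Q s ℓ ℓ ((s ℓ')⁻¹) /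
          ((1 - s ℓ' / (s ℓ')⁻¹) * pr N s ℓ ℓ' ((s ℓ')⁻¹))
      else if k = ℓ' then
        s ℓ' * (s ℓ')⁻¹ * nb N Q s ℓ ℓ' ((s ℓ')⁻¹) /
          ((1 - (s ℓ')⁻¹ / s ℓ') * prc N s ℓ ℓ' (s ℓ'))
      else 0)) = 0 := by
    rw [← Finset.add_sum_erase _ _ hℓ, ← Finset.add_sum_erase _ _ hmem']
    rw [if_pos rfl, if_neg hne', if_pos rfl]
    rw [Finset.sum_eq_zero (fun i hi => ?_)]
    · rw [add_zero, nb_case2 hne' hb0 hQ hs0, pr_case2 hb0 hsJ, hcard]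
      exact res2 hb0 hbb hprc _
    · have h1 := Finset.mem_erase.1 hi
      have h2 := Finset.mem_erase.1 h1.2
      rw [if_neg h2.1, if_neg h1.1]
  have hts : Filter.Tendsto (fun z =>
      ∑ k ∈ Finset.Icc 1 N, sh s ℓ z k * (nb N Q s ℓ k z / db N s ℓ k z) * (z - (s ℓ')⁻¹))
      (𝓝[≠] ((s ℓ')⁻¹)) (𝓝 0) := by
    rw [← hLsum]
    refine tendsto_finset_sum _ fun k hk => ?_
    by_cases hkl : k = ℓ
    · rw [hkl, if_pos rfl]
      exact sing_l_case2 hℓ' hne' hb0 hs0 hsJ hW1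
    · rw [if_neg hkl]
      by_cases hkl' : k = ℓ'
      · rw [hkl', if_pos rfl]
        exact sing_l'_case2 hℓ hne hb0 hs0 hW2
      · rw [if_neg hkl']
        refine generic_tendsto ha0 hs0 hkl (hs0 k hk hkl) fun i hi => ?_
        have hik : i ≠ k := (Finset.mem_erase.1 hi).1
        have hiI : i ∈ Finset.Icc 1 N := Finset.mem_of_mem_erase hi
        by_cases hil : i = ℓ
        · rw [hil, sh_self]
          constructor
          · intro h
            apply hp k hk ℓ' hℓ' hkl hne'
            rw [← h]
            field_simp
          · intro h
            apply hd k hk ℓ' hℓ' hkl hne' (fun h2 => hkl' h2)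
            field_simp at h
            exact h
        · rw [sh_of_ne hil]
          exact ⟨hd i hiI k hk hil hkl hik, hp i hiI k hk hil hkl⟩
  refine hts.congr fun z => ?_
  rw [FresB_eq, Finset.sum_mul]
end main

end ResVan

/-- vanishing of residues in the proof of Proposition 3.2.  For `ℓ ≠ ℓ'`
and generic fixed values of the `s_i` (`i ≠ ℓ`) — nonzero, pairwise distinct, with
`s_i s_j ≠ 1` — the residues of `F`, as a rational function of `s_ℓ`, at the points
`s_ℓ = s_{ℓ'}` and `s_ℓ = 1/s_{ℓ'}` vanish:
`lim_{s_ℓ → s_{ℓ'}} F·(s_ℓ - s_{ℓ'}) = 0` and `lim_{s_ℓ → 1/s_{ℓ'}} F·(s_ℓ - 1/s_{ℓ'}) = 0`.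
Consequently these singularities are removable: `F` tends to finite limits there, so it has
no poles away from `s_ℓ = 0` and `s_ℓ = ∞`. -/
theorem residues_vanish_typeB (N : ℕ) (Q s : ℕ → ℂ) (ℓ ℓ' : ℕ)
    (hℓ : ℓ ∈ Finset.Icc 1 N) (hℓ' : ℓ' ∈ Finset.Icc 1 N) (hne : ℓ ≠ ℓ')
    (hQ : ∀ i ∈ Finset.Icc 1 N, Q i ≠ 0)
    (hs0 : ∀ i ∈ Finset.Icc 1 N, i ≠ ℓ → s i ≠ 0)
    (hd : ∀ i ∈ Finset.Icc 1 N, ∀ j ∈ Finset.Icc 1 N,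
      i ≠ ℓ → j ≠ ℓ → i ≠ j → s i ≠ s j)
    (hp : ∀ i ∈ Finset.Icc 1 N, ∀ j ∈ Finset.Icc 1 N,
      i ≠ ℓ → j ≠ ℓ → s i * s j ≠ 1) :
    (Filter.Tendsto (fun z : ℂ => FresB N Q s ℓ z * (z - s ℓ'))
        (nhdsWithin (s ℓ') {s ℓ'}ᶜ) (nhds 0)
      ∧ Filter.Tendsto (fun z : ℂ => FresB N Q s ℓ z * (z - (s ℓ')⁻¹))
        (nhdsWithin ((s ℓ')⁻¹) {(s ℓ')⁻¹}ᶜ) (nhds 0))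
    ∧ ((∃ L : ℂ, Filter.Tendsto (fun z : ℂ => FresB N Q s ℓ z)
          (nhdsWithin (s ℓ') {s ℓ'}ᶜ) (nhds L))
      ∧ ∃ L' : ℂ, Filter.Tendsto (fun z : ℂ => FresB N Q s ℓ z)
          (nhdsWithin ((s ℓ')⁻¹) {(s ℓ')⁻¹}ᶜ) (nhds L')) := by
  classical
  have hne' : ℓ' ≠ ℓ := Ne.symm hne
  have hb0 : s ℓ' ≠ 0 := hs0 ℓ' hℓ' hne'
  have ha0 : (s ℓ')⁻¹ ≠ 0 := inv_ne_zero hb0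
  have hbb : s ℓ' * s ℓ' ≠ 1 := hp ℓ' hℓ' ℓ' hℓ' hne' hne'
  have hsJ := ResVan.hsJ_of (ℓ' := ℓ') hs0
  have hpr1 : ResVan.pr N s ℓ ℓ' (s ℓ') ≠ 0 := by
    refine ResVan.pr_ne_zero fun i hi => ?_
    have h1 := Finset.mem_erase.1 hi
    have h2 := Finset.mem_erase.1 h1.2
    refine ⟨fun h => hd i h2.2 ℓ' hℓ' h2.1 hne' h1.1 ((div_eq_one_iff_eq hb0).1 h),
      hp i h2.2 ℓ' hℓ' h2.1 hne'⟩
  have hprc : ResVan.prc N s ℓ ℓ' (s ℓ') ≠ 0 := by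
    rw [← ResVan.pr_eq_prc]; exact hpr1
  have hpra : ResVan.pr N s ℓ ℓ' ((s ℓ')⁻¹) ≠ 0 := by
    refine ResVan.pr_ne_zero fun i hi => ?_
    have h1 := Finset.mem_erase.1 hi
    have h2 := Finset.mem_erase.1 h1.2
    constructor
    · have he : s i / (s ℓ')⁻¹ = s i * s ℓ' := by field_simp
      rw [he]
      exact hp i h2.2 ℓ' hℓ' h2.1 hne'
    · intro h
      apply hd i h2.2 ℓ' hℓ' h2.1 hne' h1.1
      field_simp at h
      exact h
  have hgen1 : ∀ k ∈ Finset.Icc 1 N, k ≠ ℓ → k ≠ ℓ' →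
      ∀ i ∈ (Finset.Icc 1 N).erase k,
        ResVan.sh s ℓ (s ℓ') i ≠ s k ∧ ResVan.sh s ℓ (s ℓ') i * s k ≠ 1 := by
    intro k hk hkl hkl' i hi
    have hik : i ≠ k := (Finset.mem_erase.1 hi).1
    have hiI : i ∈ Finset.Icc 1 N := Finset.mem_of_mem_erase hi
    by_cases hil : i = ℓ
    · rw [hil, ResVan.sh_self]
      exact ⟨hd ℓ' hℓ' k hk hne' hkl (fun h => hkl' h.symm), hp ℓ' hℓ' k hk hne' hkl⟩
    · rw [ResVan.sh_of_ne hil]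
      exact ⟨hd i hiI k hk hil hkl hik, hp i hiI k hk hil hkl⟩
  have hgen2 : ∀ k ∈ Finset.Icc 1 N, k ≠ ℓ → k ≠ ℓ' →
      ∀ i ∈ (Finset.Icc 1 N).erase k,
        ResVan.sh s ℓ ((s ℓ')⁻¹) i ≠ s k ∧ ResVan.sh s ℓ ((s ℓ')⁻¹) i * s k ≠ 1 := by
    intro k hk hkl hkl' i hi
    have hik : i ≠ k := (Finset.mem_erase.1 hi).1
    have hiI : i ∈ Finset.Icc 1 N := Finset.mem_of_mem_erase hi
    by_cases hil : i = ℓ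
    · rw [hil, ResVan.sh_self]
      constructor
      · intro h
        apply hp k hk ℓ' hℓ' hkl hne'
        rw [← h]
        field_simp
      · intro h
        apply hd k hk ℓ' hℓ' hkl hne' (fun h2 => hkl' h2)
        field_simp at h
        exact h
    · rw [ResVan.sh_of_ne hil]
      exact ⟨hd i hiI k hk hil hkl hik, hp i hiI k hk hil hkl⟩
  have h1 := ResVan.part1_case1 hℓ hℓ' hne hQ hs0 hd hp
  have h2 := ResVan.part1_case2 hℓ hℓ' hne hQ hs0 hd hp
  have hd1 : ∀ᶠ z in 𝓝[≠] (s ℓ'), DifferentiableAt ℂ (FresB N Q s ℓ) z := by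
    have hdb := ResVan.ev_db_case1 hℓ hℓ' hne hs0 hbb hsJ hpr1 hgen1
    have hz0 : ∀ᶠ z in 𝓝[≠] (s ℓ'), z ≠ (0 : ℂ) := eventually_ne_nhdsWithin hb0
    filter_upwards [hz0, hdb] with z hz0 hdb
    exact ResVan.diff_F hz0 hs0 hdb
  have hd2 : ∀ᶠ z in 𝓝[≠] ((s ℓ')⁻¹), DifferentiableAt ℂ (FresB N Q s ℓ) z := by
    have hdb := ResVan.ev_db_case2 hℓ hℓ' hne hs0 hbb hsJ hpra hprc hgen2
    have hz0 : ∀ᶠ z in 𝓝[≠] ((s ℓ')⁻¹), z ≠ (0 : ℂ) := eventually_ne_nhdsWithin ha0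
    filter_upwards [hz0, hdb] with z hz0 hdb
    exact ResVan.diff_F hz0 hs0 hdb
  exact ⟨⟨h1, h2⟩, ResVan.exists_lim h1 hd1, ResVan.exists_lim h2 hd2⟩
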